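/- Let F be a field and x_1,…,x_ℓ ∈ F nonzero, and let fold be as above. For b = ∑_{i∈I} r_i • u_i with I ⊆ Fin (2^ℓ) and r : I → F, the result of applying fold x_1, …, fold x_ℓ in sequence is the length-1 vector with entry ∑_{i∈I} r_i * ∏_{k=1}^{ℓ} (x_k⁻¹)^{i_{ℓ-k}}, where (i_{ℓ-1},…,i_0) are the bits of i. -/

import Mathlib

/-- One folding round of the scalar vector: `(fold m x b) i = b_L i + x⁻¹ * b_R i`. -/
def fold {F : Type*} [Field F] (m : ℕ) (x : F) (b : Fin (2 * m) → F) : Fin m → F :=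
  fun i => b ⟨i.val, by have := i.isLt; omega⟩ + x⁻¹ * b ⟨m + i.val, by have := i.isLt; omega⟩

/-- Iterated folding with challenges `x 0, x 1, …` applied in order. -/
def foldIter {F : Type*} [Field F] : (ℓ : ℕ) → (Fin ℓ → F) → (Fin (2 ^ ℓ) → F) → (Fin 1 → F)
  | 0, _, b => b
  | (ℓ + 1), x, b =>
      foldIter ℓ (fun k => x k.succ)
        (fold (2 ^ ℓ) (x 0) (fun i => b (Fin.cast (show 2 * 2 ^ ℓ = 2 ^ (ℓ + 1) by ring) i)))

lemma div_mod_shift (ℓ d i : ℕ) (hd : d < ℓ) :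
    (2 ^ ℓ + i) / 2 ^ d % 2 = i / 2 ^ d % 2 := by
  have h1 : 2 ^ ℓ = 2 ^ (ℓ - d) * 2 ^ d := by rw [← pow_add]; congr 1; omega
  have h2 : 2 ^ (ℓ - d) = 2 ^ (ℓ - d - 1) * 2 := by rw [← pow_succ]; congr 1; omega
  rw [h1, add_comm, Nat.add_mul_div_right _ _ (Nat.two_pow_pos d), h2,
    Nat.add_mul_mod_self_right]

lemma foldIter_eq {F : Type*} [Field F] : ∀ (ℓ : ℕ) (x : Fin ℓ → F) (b : Fin (2 ^ ℓ) → F),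
    foldIter ℓ x b =
      fun _ => ∑ j : Fin (2 ^ ℓ), b j * ∏ k : Fin ℓ, ((x k)⁻¹) ^ (j.val / 2 ^ (ℓ - 1 - k.val) % 2)
  | 0, x, b => by
    funext t
    simp [foldIter]
    exact congrArg b (Fin.ext (by omega))
  | (ℓ + 1), x, b => by
    funext t
    rw [foldIter, foldIter_eq ℓ]
    have hcast : 2 ^ ℓ + 2 ^ ℓ = 2 ^ (ℓ + 1) := by ring
    rw [← Fin.sum_congr' _ hcast, Fin.sum_univ_add]
    simp only [fold, add_mul, Finset.sum_add_distrib, mul_assoc]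
    congr 1
    · apply Finset.sum_congr rfl
      intro i _
      rw [Fin.prod_univ_succ]
      have h0 : (↑(Fin.cast hcast (Fin.castAdd (2 ^ ℓ) i)) : ℕ) / 2 ^ (ℓ + 1 - 1 - ((0 : Fin (ℓ+1)) : ℕ)) % 2 = 0 := by
        simp only [Fin.coe_cast, Fin.coe_castAdd, Fin.val_zero, Nat.sub_zero,
          Nat.add_sub_cancel]
        rw [Nat.div_eq_of_lt i.isLt]
      rw [h0, pow_zero, one_mul]
      congr 1
      apply Finset.prod_congr rfl
      intro k _
      have hv : (↑(Fin.cast hcast (Fin.castAdd (2 ^ ℓ) i)) : ℕ) = ↑i := rfl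
      have hk : ℓ + 1 - 1 - ((k.succ : Fin (ℓ+1)) : ℕ) = ℓ - 1 - ↑k := by
        simp only [Fin.val_succ]; omega
      rw [hv, hk]
    · apply Finset.sum_congr rfl
      intro i _
      rw [Fin.prod_univ_succ]
      have h0 : (↑(Fin.cast hcast (Fin.natAdd (2 ^ ℓ) i)) : ℕ) / 2 ^ (ℓ + 1 - 1 - ((0 : Fin (ℓ+1)) : ℕ)) % 2 = 1 := by
        simp only [Fin.coe_cast, Fin.coe_natAdd, Fin.val_zero, Nat.sub_zero,
          Nat.add_sub_cancel]
        rw [add_comm, Nat.add_div_right _ (Nat.two_pow_pos ℓ),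
          Nat.div_eq_of_lt i.isLt]
      rw [h0, pow_one, ← mul_assoc, mul_comm ((x 0)⁻¹), mul_assoc]
      congr 1
      congr 1
      apply Finset.prod_congr rfl
      intro k _
      have hv : (↑(Fin.cast hcast (Fin.natAdd (2 ^ ℓ) i)) : ℕ) = 2 ^ ℓ + ↑i := rfl
      have hk : ℓ + 1 - 1 - ((k.succ : Fin (ℓ+1)) : ℕ) = ℓ - 1 - ↑k := by
        simp only [Fin.val_succ]; omega
      rw [hv, hk, div_mod_shift ℓ _ _ (by omega)]

theorem stmt6 {F : Type*} [Field F] (ℓ : ℕ) (x : Fin ℓ → F) (hx : ∀ k, x k ≠ 0)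
    (I : Finset (Fin (2 ^ ℓ))) (r : Fin (2 ^ ℓ) → F) :
    foldIter ℓ x (∑ i ∈ I, r i • fun a => if a = i then (1 : F) else 0) =
      fun _ => ∑ i ∈ I, r i * ∏ k : Fin ℓ, ((x k)⁻¹) ^ (i.val / 2 ^ (ℓ - 1 - k.val) % 2) := by
  rw [foldIter_eq]
  funext t
  simp only [Finset.sum_apply, Pi.smul_apply, smul_eq_mul, mul_one, mul_zero, mul_ite,
    Finset.sum_mul, ite_mul, zero_mul]
  rw [Finset.sum_comm]
  apply Finset.sum_congr rfl
  intro i _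
  simp
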